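/- arXiv:1802.03742 — 2 statements merged into one kernel-verified Lean document; each statement's English description precedes it below -/
import Mathlib

section
/- Let u : A → B(H) be a unital completely positive map from a unital C*-algebra A, with Stinespring dilation π : A → B(Ĥ) where H ⊆ Ĥ and u(a) = P_H π(a)|_H. If x ∈ A is unitary and u(x) is unitary, then π(x) commutes with the orthogonal projection P_H onto H. -/
open ContinuousLinearMap

lemma mem_of_norm_orthogonalProjection_eq {E : Type*} [NormedAddCommGroup E]
    [InnerProductSpace ℂ E] (K : Submodule ℂ E) [CompleteSpace K] {v : E}
    (h : ‖(Submodule.orthogonalProjection K v : E)‖ = ‖v‖) : v ∈ K := by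
  have hsq := Submodule.orthogonalProjectionFn_norm_sq K v
  rw [Submodule.orthogonalProjectionFn_eq, h] at hsq
  have h0 : ‖v - (Submodule.orthogonalProjection K v : E)‖ = 0 := by
    nlinarith [norm_nonneg (v - (Submodule.orthogonalProjection K v : E))]
  have hv : v = (Submodule.orthogonalProjection K v : E) := sub_eq_zero.mp (norm_eq_zero.mp h0)
  rw [hv]
  exact (Submodule.orthogonalProjection K v).2

/-- Let `u : A → B(H)` be a unital completely positive map on a unital C*-algebra `A`,
given by a Stinespring dilation: a unital *-homomorphism `π : A → B(Ĥ)` with `H ⊆ Ĥ` and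
`u a = P_H π(a)|_H`. If `x ∈ A` is unitary and `u x` is unitary, then `π x` commutes with
the orthogonal projection `P_H` onto `H`. -/
theorem stinespring_unitary_commutes_proj
    {A E : Type*} [CStarAlgebra A] [StarModule ℂ A]
    [NormedAddCommGroup E] [InnerProductSpace ℂ E] [CompleteSpace E]
    (K : Submodule ℂ E) [CompleteSpace K]
    (π : A →⋆ₐ[ℂ] (E →L[ℂ] E))
    (u : A → (K →L[ℂ] K))
    (hu : ∀ a : A, u a = (Submodule.orthogonalProjection K).comp ((π a).comp K.subtypeL))
    (x : A) (hx : x ∈ unitary A) (hux : u x ∈ unitary (K →L[ℂ] K)) :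
    Commute (π x) (K.subtypeL.comp (Submodule.orthogonalProjection K)) := by
  obtain ⟨P, hP⟩ : ∃ P : E →L[ℂ] E, P = K.subtypeL.comp (Submodule.orthogonalProjection K) := ⟨_, rfl⟩
  rw [show K.subtypeL.comp (Submodule.orthogonalProjection K) = P from hP.symm]
  -- invariance of K under π y for y with u y unitary
  have key : ∀ y : A, y ∈ unitary A → u y ∈ unitary (K →L[ℂ] K) →
      ∀ v : E, v ∈ K → π y v ∈ K := by
    intro y hy huy v hv
    have h1 : ‖π y v‖ = ‖v‖ :=
      (π y).norm_map_of_mem_unitary (Unitary.map_mem π hy) v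
    have h2 : ‖u y ⟨v, hv⟩‖ = ‖(⟨v, hv⟩ : K)‖ :=
      (u y).norm_map_of_mem_unitary huy _
    rw [hu] at h2
    simp only [ContinuousLinearMap.comp_apply, Submodule.subtypeL_apply] at h2
    have h3 : ‖(Submodule.orthogonalProjection K (π y v) : E)‖ = ‖π y v‖ := by
      rw [← Submodule.coe_norm, h2, h1]
      rfl
    exact mem_of_norm_orthogonalProjection_eq K h3
  -- u (star x) is unitary
  have hustar : u (star x) = star (u x) := by
    rw [hu, hu, map_star, star_eq_adjoint, star_eq_adjoint, adjoint_comp, adjoint_comp,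
      Submodule.adjoint_subtypeL, Submodule.adjoint_orthogonalProjection]
    rfl
  have huxs : u (star x) ∈ unitary (K →L[ℂ] K) := by
    rw [hustar]; exact Unitary.star_mem hux
  -- P w = w for w ∈ K
  have hPid : ∀ w : E, w ∈ K → P w = w := by
    intro w hw
    rw [hP]; exact Submodule.starProjection_eq_self_iff.mpr hw
  have hPmem : ∀ v : E, P v ∈ K := by
    intro v; rw [hP]; exact (Submodule.orthogonalProjection K v).2
  have E1 : P.comp ((π x).comp P) = (π x).comp P := by
    ext v
    exact hPid _ (key x hx hux (P v) (hPmem v))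
  have E2 : P.comp ((ContinuousLinearMap.adjoint (π x)).comp P)
      = (ContinuousLinearMap.adjoint (π x)).comp P := by
    have hstarx : π (star x) = ContinuousLinearMap.adjoint (π x) := by
      rw [map_star, star_eq_adjoint]
    ext v
    rw [← hstarx]
    exact hPid _ (key (star x) (Unitary.star_mem hx) huxs (P v) (hPmem v))
  have hPadj : ContinuousLinearMap.adjoint P = P := by
    rw [hP, adjoint_comp, Submodule.adjoint_subtypeL, Submodule.adjoint_orthogonalProjection]
  have E3 : P.comp ((π x).comp P) = P.comp (π x) := by
    have h := congrArg ContinuousLinearMap.adjoint E2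
    rwa [adjoint_comp, adjoint_comp, adjoint_adjoint, hPadj, comp_assoc] at h
  show π x * P = P * π x
  rw [mul_def, mul_def, ← E1, E3]
end

section
/- Let S be a subset of contractions in ⋃ₙ Mₙ(𝒜) containing e₁₁ ⊗ 1, and let F be the set of x ∈ 𝒦₀ ⊗ 𝒜 admitting a factorization x = α₀ D₁ α₁ ⋯ D_m α_m with α_ℓ ∈ 𝒦₀ ⊗ 1 and each D_ℓ a block diagonal matrix with diagonal blocks from S. Then F is closed under addition, under left and right multiplication by scalar matrices, and under formation of block-diagonal direct sums; if S together with 𝒦₀ ⊗ 1 generates 𝒦₀ ⊗ 𝒜 as an algebra, then F = 𝒦₀ ⊗ 𝒜. -/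
set_option synthInstance.maxHeartbeats 1000000
set_option maxHeartbeats 1000000

/-- The block operator associated to a matrix with entries in `B(H)`. -/
noncomputable def matOp {H : Type*} [NormedAddCommGroup H] [InnerProductSpace ℂ H]
    {n m : ℕ} (M : Matrix (Fin n) (Fin m) (H →L[ℂ] H)) :
    PiLp 2 (fun _ : Fin m => H) →L[ℂ] PiLp 2 (fun _ : Fin n => H) :=
  ∑ i : Fin n, ∑ j : Fin m,
    (((PiLp.continuousLinearEquiv 2 ℂ (fun _ : Fin n => H)).symm :
        (∀ _ : Fin n, H) →L[ℂ] PiLp 2 (fun _ : Fin n => H)).comp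
      (ContinuousLinearMap.pi (Pi.single i (M i j)))).comp
        (PiLp.proj 2 (fun _ : Fin m => H) j)

/-- The norm of a matrix over `B(H)`. -/
noncomputable def matNorm {H : Type*} [NormedAddCommGroup H] [InnerProductSpace ℂ H]
    {n m : ℕ} (M : Matrix (Fin n) (Fin m) (H →L[ℂ] H)) : ℝ :=
  ‖matOp M‖

/-- Zero-padding of an `n × n` matrix to an `N × N` matrix (the usual identification of
`Mₙ(𝒜)` with a corner of `M_N(𝒜)`, realizing `⋃ₙ Mₙ(𝒜) = 𝒦₀ ⊗ 𝒜`). -/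
def padMat {R : Type*} [Zero R] {n N : ℕ} (_ : n ≤ N)
    (M : Matrix (Fin n) (Fin n) R) : Matrix (Fin N) (Fin N) R :=
  Matrix.of fun i j =>
    if h : (i : ℕ) < n ∧ (j : ℕ) < n then M ⟨i, h.1⟩ ⟨j, h.2⟩ else 0

/-- Block diagonal matrices all of whose diagonal blocks belong to the family `S`
(as in equation (2) of the paper). -/
inductive IsBlockDiag {R : Type*} [Ring R]
    (S : ∀ n : ℕ, Set (Matrix (Fin n) (Fin n) R)) :
    ∀ n : ℕ, Matrix (Fin n) (Fin n) R → Prop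
  | base {n : ℕ} {d : Matrix (Fin n) (Fin n) R} (h : d ∈ S n) : IsBlockDiag S n d
  | diag {n m : ℕ} {d : Matrix (Fin n) (Fin n) R} {e : Matrix (Fin m) (Fin m) R} :
      IsBlockDiag S n d → IsBlockDiag S m e →
      IsBlockDiag S (n + m)
        (Matrix.reindex finSumFinEquiv finSumFinEquiv (Matrix.fromBlocks d 0 0 e))

/-- The alternating product `α₀ D₁ α₁ ⋯ D_{m+1} α_{m+1}` of scalar matrices `α_ℓ`
(elements of `𝒦₀ ⊗ 1`) and matrices `D_ℓ` over `R`. -/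
noncomputable def chainProd {R : Type*} [Ring R] [Algebra ℂ R] {N m : ℕ}
    (α : Fin (m + 2) → Matrix (Fin N) (Fin N) ℂ)
    (D : Fin (m + 1) → Matrix (Fin N) (Fin N) R) : Matrix (Fin N) (Fin N) R :=
  (List.ofFn fun ℓ : Fin (m + 1) =>
      (α ℓ.castSucc).map (algebraMap ℂ R) * D ℓ).prod
    * (α (Fin.last (m + 1))).map (algebraMap ℂ R)

/-- `x ∈ ⋃ₙ Mₙ(𝒜)` admits a factorization `x = α₀ D₁ α₁ ⋯ D_m α_m` with the `α_ℓ`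
scalar matrices and each `D_ℓ` (a padding of) a block diagonal matrix with diagonal
blocks from `S`. -/
noncomputable def FactorsThrough {R : Type*} [Ring R] [Algebra ℂ R]
    (S : ∀ n : ℕ, Set (Matrix (Fin n) (Fin n) R))
    (n : ℕ) (x : Matrix (Fin n) (Fin n) R) : Prop :=
  ∃ (N m : ℕ) (hn : n ≤ N)
    (α : Fin (m + 2) → Matrix (Fin N) (Fin N) ℂ)
    (D : Fin (m + 1) → Matrix (Fin N) (Fin N) R),
    (∀ ℓ, ∃ (k : ℕ) (hk : k ≤ N) (d : Matrix (Fin k) (Fin k) R),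
      IsBlockDiag S k d ∧ D ℓ = padMat hk d) ∧
    padMat hn x = chainProd α D

/-- The subalgebra of `𝒦₀ ⊗ 𝒜 = ⋃ₙ Mₙ(𝒜)` generated by the scalar matrices
`𝒦₀ ⊗ 1` together with `S`. -/
inductive Gen {R : Type*} [Ring R] [Algebra ℂ R]
    (S : ∀ n : ℕ, Set (Matrix (Fin n) (Fin n) R)) :
    ∀ n : ℕ, Matrix (Fin n) (Fin n) R → Prop
  | scalar {n : ℕ} (β : Matrix (Fin n) (Fin n) ℂ) : Gen S n (β.map (algebraMap ℂ R))
  | mem {n : ℕ} {d : Matrix (Fin n) (Fin n) R} (h : d ∈ S n) : Gen S n d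
  | add {n : ℕ} {x y : Matrix (Fin n) (Fin n) R} :
      Gen S n x → Gen S n y → Gen S n (x + y)
  | mul {n : ℕ} {x y : Matrix (Fin n) (Fin n) R} :
      Gen S n x → Gen S n y → Gen S n (x * y)
  | pad {n N : ℕ} (h : n ≤ N) {x : Matrix (Fin n) (Fin n) R} :
      Gen S n x → Gen S N (padMat h x)

section Helpers
open Matrix

/-- rectangular zero-padding -/
def padR {R : Type*} [Zero R] {a b N : ℕ} (_ : a ≤ N) (_ : b ≤ N)
    (M : Matrix (Fin a) (Fin b) R) : Matrix (Fin N) (Fin N) R :=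
  Matrix.of fun i j =>
    if h : (i : ℕ) < a ∧ (j : ℕ) < b then M ⟨i, h.1⟩ ⟨j, h.2⟩ else 0

theorem padR_eq {R : Type*} [Zero R] {n N : ℕ} (h : n ≤ N)
    (M : Matrix (Fin n) (Fin n) R) : padR h h M = padMat h M := rfl

theorem padMat_refl {R : Type*} [Zero R] {n : ℕ} (h : n ≤ n)
    (M : Matrix (Fin n) (Fin n) R) : padMat h M = M := by
  ext i j
  simp [padMat, i.isLt, j.isLt]

theorem padMat_trans {R : Type*} [Zero R] {n N N' : ℕ} (h : n ≤ N) (h' : N ≤ N')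
    (M : Matrix (Fin n) (Fin n) R) :
    padMat h' (padMat h M) = padMat (h.trans h') M := by
  ext i j
  simp only [padMat, Matrix.of_apply]
  by_cases hi : (i : ℕ) < n <;> by_cases hj : (j : ℕ) < n
  · simp [hi, hj, hi.trans_le h, hj.trans_le h]
  · simp [hi, hj]
  · simp [hi, hj]
  · simp [hi, hj]

theorem padMat_map {R S : Type*} [Zero R] [Zero S] {n N : ℕ} (h : n ≤ N)
    (f : R → S) (hf : f 0 = 0) (M : Matrix (Fin n) (Fin n) R) :
    (padMat h M).map f = padMat h (M.map f) := by
  ext i j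
  by_cases hij : (i : ℕ) < n ∧ (j : ℕ) < n <;> simp [padMat, hij, hf]

theorem sum_fin_of_le {M : Type*} [AddCommMonoid M] {k N : ℕ} (h : k ≤ N)
    (f : Fin k → M) :
    (∑ l : Fin N, if hl : (l : ℕ) < k then f ⟨l, hl⟩ else 0) = ∑ l : Fin k, f l := by
  rw [Fin.sum_univ_eq_sum_range (fun l => if hl : l < k then f ⟨l, hl⟩ else 0) N,
    show (∑ l : Fin k, f l) = ∑ l : Fin k,
        (fun l => if hl : l < k then f ⟨l, hl⟩ else 0) (l : ℕ) from
      Finset.sum_congr rfl fun l _ => by simp [l.isLt],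
    Fin.sum_univ_eq_sum_range (fun l => if hl : l < k then f ⟨l, hl⟩ else 0) k]
  exact (Finset.sum_subset (Finset.range_subset_range.2 h)
    (fun x _ hx => dif_neg (by simpa using hx))).symm

theorem padR_mul {R : Type*} [NonAssocSemiring R] {a b c N : ℕ}
    (ha : a ≤ N) (hb : b ≤ N) (hc : c ≤ N)
    (A : Matrix (Fin a) (Fin b) R) (B : Matrix (Fin b) (Fin c) R) :
    padR ha hb A * padR hb hc B = padR ha hc (A * B) := by
  ext i j
  simp only [Matrix.mul_apply, padR, Matrix.of_apply]
  by_cases hij : (i : ℕ) < a ∧ (j : ℕ) < c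
  · rw [dif_pos hij, ← sum_fin_of_le hb (fun l => A ⟨i, hij.1⟩ l * B l ⟨j, hij.2⟩)]
    refine Finset.sum_congr rfl fun l _ => ?_
    by_cases hl : (l : ℕ) < b
    · rw [dif_pos ⟨hij.1, hl⟩, dif_pos ⟨hl, hij.2⟩, dif_pos hl]
    · rw [dif_neg (fun hc => hl hc.2), zero_mul, dif_neg hl]
  · rw [dif_neg hij]
    apply Finset.sum_eq_zero
    intro l _
    rcases not_and_or.1 hij with hi | hj
    · rw [dif_neg (fun hco : (i : ℕ) < a ∧ (l : ℕ) < b => hi hco.1), zero_mul]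
    · rw [dif_neg (fun hco : (l : ℕ) < b ∧ (j : ℕ) < c => hj hco.2), mul_zero]

theorem padR_map {R S : Type*} [Zero R] [Zero S] {a b N : ℕ} (ha : a ≤ N) (hb : b ≤ N)
    (f : R → S) (hf : f 0 = 0) (M : Matrix (Fin a) (Fin b) R) :
    (padR ha hb M).map f = padR ha hb (M.map f) := by
  ext i j
  by_cases hij : (i : ℕ) < a ∧ (j : ℕ) < b <;> simp [padR, hij, hf]

/-- partial "permutation"-type scalar matrix -/
def scalP {a N : ℕ} (g : Fin a → Fin N) : Matrix (Fin N) (Fin N) ℂ :=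
  Matrix.of fun i j =>
    if h : (i : ℕ) < a then (if g ⟨i, h⟩ = j then 1 else 0) else 0

theorem scalP_mul {R : Type*} [Ring R] [Algebra ℂ R] {a N : ℕ} (g : Fin a → Fin N)
    (M : Matrix (Fin N) (Fin N) R) :
    (scalP g).map (algebraMap ℂ R) * M =
      Matrix.of (fun (i j : Fin N) => if h : (i : ℕ) < a then M (g ⟨i, h⟩) j else 0) := by
  ext i j
  simp only [Matrix.mul_apply, scalP, Matrix.map_apply, Matrix.of_apply]
  by_cases hi : (i : ℕ) < a
  · simp only [hi, dif_pos]
    rw [Finset.sum_congr rfl (fun l _ => by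
      rw [apply_ite (algebraMap ℂ R), _root_.map_one, _root_.map_zero, ite_mul, one_mul, zero_mul])]
    exact (Finset.sum_ite_eq Finset.univ (g ⟨i, hi⟩) (fun l => M l j)).trans
      (if_pos (Finset.mem_univ _))
  · simp [hi]

theorem mul_scalP {R : Type*} [Ring R] [Algebra ℂ R] {a N : ℕ} (g : Fin a → Fin N)
    (M : Matrix (Fin N) (Fin N) R) :
    M * ((scalP g)ᵀ).map (algebraMap ℂ R) =
      Matrix.of (fun (i j : Fin N) => if h : (j : ℕ) < a then M i (g ⟨j, h⟩) else 0) := by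
  ext i j
  simp only [Matrix.mul_apply, scalP, Matrix.map_apply, Matrix.transpose_apply,
    Matrix.of_apply]
  by_cases hj : (j : ℕ) < a
  · simp only [hj, dif_pos]
    rw [Finset.sum_congr rfl (fun l _ => by
      rw [apply_ite (algebraMap ℂ R), _root_.map_one, _root_.map_zero, mul_ite, mul_one, mul_zero])]
    exact (Finset.sum_ite_eq Finset.univ (g ⟨j, hj⟩) (fun l => M i l)).trans
      (if_pos (Finset.mem_univ _))
  · simp [hj]

theorem scalP_conj {R : Type*} [Ring R] [Algebra ℂ R] {a N : ℕ} (ha : a ≤ N)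
    (g g' : Fin a → Fin N) (M : Matrix (Fin N) (Fin N) R) :
    (scalP g).map (algebraMap ℂ R) * M * ((scalP g')ᵀ).map (algebraMap ℂ R) =
      padMat ha (M.submatrix g g') := by
  rw [scalP_mul, mul_scalP]
  ext i j
  simp only [Matrix.of_apply, padMat, Matrix.submatrix_apply]
  by_cases hi : (i : ℕ) < a <;> by_cases hj : (j : ℕ) < a <;>
    simp [hi, hj]

section CH
variable {R : Type*} [Ring R] [Algebra ℂ R] {S : ∀ n : ℕ, Set (Matrix (Fin n) (Fin n) R)}

theorem isBlockDiag_one (hone : (1 : Matrix (Fin 1) (Fin 1) R) ∈ S 1) :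
    ∀ {k : ℕ}, 1 ≤ k → IsBlockDiag S k (1 : Matrix (Fin k) (Fin k) R) := by
  intro k hk
  induction k with
  | zero => omega
  | succ k ih =>
    rcases Nat.eq_or_lt_of_le hk with h1 | h1
    · have hk0 : k = 0 := by omega
      subst hk0
      exact IsBlockDiag.base hone
    · have hk1 : 1 ≤ k := by omega
      have hd := IsBlockDiag.diag (ih hk1) (IsBlockDiag.base hone)
      rw [Matrix.fromBlocks_one, Matrix.reindex_apply, Matrix.submatrix_one_equiv] at hd
      exact hd

theorem isBlockDiag_cast {a b : ℕ} (e : a = b) {M : Matrix (Fin a) (Fin a) R}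
    (h : IsBlockDiag S a M) :
    IsBlockDiag S b (M.submatrix (Fin.cast e.symm) (Fin.cast e.symm)) := by
  subst e
  exact h

theorem extend_blockDiag (hone : (1 : Matrix (Fin 1) (Fin 1) R) ∈ S 1)
    {k N : ℕ} (hk : k ≤ N) {d : Matrix (Fin k) (Fin k) R} (hd : IsBlockDiag S k d) :
    ∃ D : Matrix (Fin N) (Fin N) R, IsBlockDiag S N D ∧
      padMat hk d = (scalP (Fin.castLE hk)).map (algebraMap ℂ R) * D *
        ((scalP (Fin.castLE hk))ᵀ).map (algebraMap ℂ R) := by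
  rcases Nat.eq_or_lt_of_le hk with h1 | h1
  · subst h1
    refine ⟨d, hd, ?_⟩
    rw [scalP_conj hk]
    have hsub : d.submatrix (Fin.castLE hk) (Fin.castLE hk) = d := rfl
    rw [hsub]
  · set r := N - k with hr
    have hr1 : 1 ≤ r := by omega
    have e : k + r = N := by omega
    refine ⟨(Matrix.reindex finSumFinEquiv finSumFinEquiv
        (Matrix.fromBlocks d 0 0 (1 : Matrix (Fin r) (Fin r) R))).submatrix
        (Fin.cast e.symm) (Fin.cast e.symm),
      isBlockDiag_cast e (IsBlockDiag.diag hd (isBlockDiag_one hone hr1)), ?_⟩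
    rw [scalP_conj hk]
    have hsub : ((Matrix.reindex finSumFinEquiv finSumFinEquiv
        (Matrix.fromBlocks d 0 0 (1 : Matrix (Fin r) (Fin r) R))).submatrix
        (Fin.cast e.symm) (Fin.cast e.symm)).submatrix
        (Fin.castLE hk) (Fin.castLE hk) = d := by
      ext i j
      have h1 : Fin.cast e.symm (Fin.castLE hk i) = Fin.castAdd r i := rfl
      have h2 : Fin.cast e.symm (Fin.castLE hk j) = Fin.castAdd r j := rfl
      simp only [Matrix.submatrix_apply, Matrix.reindex_apply, h1, h2,
        finSumFinEquiv_symm_apply_castAdd, Matrix.fromBlocks_apply₁₁]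
    rw [hsub]

inductive Ch (S : ∀ n : ℕ, Set (Matrix (Fin n) (Fin n) R)) (N : ℕ) :
    ℕ → Matrix (Fin N) (Fin N) R → Prop
  | base (β : Matrix (Fin N) (Fin N) ℂ) : Ch S N 0 (β.map (algebraMap ℂ R))
  | cons (α : Matrix (Fin N) (Fin N) ℂ) {D : Matrix (Fin N) (Fin N) R}
      (hD : IsBlockDiag S N D) {m : ℕ} {z : Matrix (Fin N) (Fin N) R} :
      Ch S N m z → Ch S N (m + 1) ((α.map (algebraMap ℂ R)) * D * z)

theorem Ch_smul_left {N m : ℕ} {z : Matrix (Fin N) (Fin N) R}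
    (γ : Matrix (Fin N) (Fin N) ℂ) (h : Ch S N m z) :
    Ch S N m ((γ.map (algebraMap ℂ R)) * z) := by
  induction h with
  | base β => rw [← Matrix.map_mul]; exact Ch.base _
  | cons α hD h ih =>
    rw [← mul_assoc, ← mul_assoc, ← Matrix.map_mul]
    exact Ch.cons _ hD h

theorem Ch_smul_right {N m : ℕ} {z : Matrix (Fin N) (Fin N) R}
    (γ : Matrix (Fin N) (Fin N) ℂ) (h : Ch S N m z) :
    Ch S N m (z * (γ.map (algebraMap ℂ R))) := by
  induction h with
  | base β => rw [← Matrix.map_mul]; exact Ch.base _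
  | cons α hD h ih =>
    rw [mul_assoc]
    exact Ch.cons _ hD ih

theorem padMat_mul {n N : ℕ} (h : n ≤ N) (A B : Matrix (Fin n) (Fin n) R) :
    padMat h (A * B) = padMat h A * padMat h B := by
  rw [← padR_eq, ← padR_eq, ← padR_eq, padR_mul]

theorem Ch_pad (hone : (1 : Matrix (Fin 1) (Fin 1) R) ∈ S 1)
    {N N' m : ℕ} (h' : N ≤ N') {z : Matrix (Fin N) (Fin N) R}
    (h : Ch S N m z) : Ch S N' m (padMat h' z) := by
  induction h with
  | base β =>
    rw [← padMat_map h' _ (map_zero _)]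
    exact Ch.base _
  | @cons α D hD m z h ih =>
    obtain ⟨D', hD', hEq⟩ := extend_blockDiag hone h' hD
    have key : padMat h' (α.map (algebraMap ℂ R) * D * z) =
        (padMat h' α).map (algebraMap ℂ R) *
          ((scalP (Fin.castLE h')).map (algebraMap ℂ R) * D' *
            ((scalP (Fin.castLE h'))ᵀ).map (algebraMap ℂ R)) * padMat h' z := by
      rw [padMat_mul, padMat_mul, ← hEq, ← padMat_map h' _ (map_zero _)]
    rw [key]
    have h2 := Ch.cons (padMat h' α * scalP (Fin.castLE h')) hD'
      (Ch_smul_left ((scalP (Fin.castLE h'))ᵀ) ih)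
    simpa only [Matrix.map_mul, mul_assoc] using h2

theorem Ch_mono (hone : (1 : Matrix (Fin 1) (Fin 1) R) ∈ S 1)
    {N m : ℕ} (hN : 1 ≤ N) {z : Matrix (Fin N) (Fin N) R}
    (h : Ch S N m z) : Ch S N (m + 1) z := by
  have h2 := Ch.cons (1 : Matrix (Fin N) (Fin N) ℂ) (isBlockDiag_one hone hN) h
  simpa [Matrix.map_one _ (map_zero _) (_root_.map_one _)] using h2

theorem Ch_mono' (hone : (1 : Matrix (Fin 1) (Fin 1) R) ∈ S 1)
    {N m m' : ℕ} (hN : 1 ≤ N) (hm : m ≤ m') {z : Matrix (Fin N) (Fin N) R}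
    (h : Ch S N m z) : Ch S N m' z := by
  obtain ⟨k, rfl⟩ := Nat.exists_eq_add_of_le hm
  clear hm
  induction k with
  | zero => exact h
  | succ k ih => exact Ch_mono hone hN ih

theorem Ch_mul {N a b : ℕ} {z w : Matrix (Fin N) (Fin N) R}
    (h1 : Ch S N a z) (h2 : Ch S N b w) : Ch S N (a + b) (z * w) := by
  induction h1 with
  | base β =>
    rw [Nat.zero_add]
    exact Ch_smul_left β h2
  | cons α hD h ih =>
    rw [show ∀ m : ℕ, m + 1 + b = m + b + 1 from fun m => by omega, mul_assoc]
    exact Ch.cons α hD ih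

theorem reindex_fromBlocks_mul {N M : ℕ} (P P' : Matrix (Fin N) (Fin N) R)
    (Q Q' : Matrix (Fin M) (Fin M) R) :
    Matrix.reindex finSumFinEquiv finSumFinEquiv (Matrix.fromBlocks (P * P') 0 0 (Q * Q')) =
      Matrix.reindex finSumFinEquiv finSumFinEquiv (Matrix.fromBlocks P 0 0 Q) *
        Matrix.reindex finSumFinEquiv finSumFinEquiv (Matrix.fromBlocks P' 0 0 Q') := by
  rw [Matrix.reindex_apply, Matrix.reindex_apply, Matrix.reindex_apply,
    Matrix.submatrix_mul_equiv, Matrix.fromBlocks_multiply]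
  simp

theorem reindex_fromBlocks_map {N M : ℕ} (β : Matrix (Fin N) (Fin N) ℂ)
    (γ : Matrix (Fin M) (Fin M) ℂ) :
    Matrix.reindex finSumFinEquiv finSumFinEquiv
        (Matrix.fromBlocks (β.map (algebraMap ℂ R)) 0 0 (γ.map (algebraMap ℂ R))) =
      (Matrix.reindex finSumFinEquiv finSumFinEquiv (Matrix.fromBlocks β 0 0 γ)).map
        (algebraMap ℂ R) := by
  rw [Matrix.reindex_apply, Matrix.reindex_apply, ← Matrix.submatrix_map]
  rw [Matrix.fromBlocks_map]
  simp [Matrix.map_zero _ (map_zero (algebraMap ℂ R))]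

theorem Ch_dsum {N M m : ℕ} {z : Matrix (Fin N) (Fin N) R}
    (h1 : Ch S N m z) :
    ∀ {w : Matrix (Fin M) (Fin M) R}, Ch S M m w →
      Ch S (N + M) m
        (Matrix.reindex finSumFinEquiv finSumFinEquiv (Matrix.fromBlocks z 0 0 w)) := by
  induction h1 with
  | base β =>
    intro w h2
    cases h2 with
    | base γ =>
      rw [reindex_fromBlocks_map]
      exact Ch.base _
  | cons α hD h ih =>
    intro w h2
    cases h2 with
    | cons α₂ hD₂ h₂ =>
      rw [reindex_fromBlocks_mul, reindex_fromBlocks_mul, reindex_fromBlocks_map]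
      exact Ch.cons _ (IsBlockDiag.diag hD hD₂) (ih h₂)

end CH

section Bridge
variable {R : Type*} [Ring R] [Algebra ℂ R] {S : ∀ n : ℕ, Set (Matrix (Fin n) (Fin n) R)}

theorem chainProd_zero {N : ℕ} (α : Fin 2 → Matrix (Fin N) (Fin N) ℂ)
    (D : Fin 1 → Matrix (Fin N) (Fin N) R) :
    chainProd α D = (α 0).map (algebraMap ℂ R) * D 0 * (α 1).map (algebraMap ℂ R) := by
  simp [chainProd, List.ofFn_succ, show (Fin.last 1 : Fin 2) = 1 from rfl]

theorem chainProd_succ {N m : ℕ} (α : Fin (m + 3) → Matrix (Fin N) (Fin N) ℂ)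
    (D : Fin (m + 2) → Matrix (Fin N) (Fin N) R) :
    chainProd α D = (α 0).map (algebraMap ℂ R) * D 0 *
      chainProd (α ∘ Fin.succ) (D ∘ Fin.succ) := by
  simp only [chainProd, List.ofFn_succ, List.prod_cons, Function.comp_def,
    Fin.succ_castSucc, Fin.castSucc_zero, Fin.succ_last, mul_assoc]

theorem chainProd_Ch (hone : (1 : Matrix (Fin 1) (Fin 1) R) ∈ S 1) :
    ∀ {m N : ℕ} (α : Fin (m + 2) → Matrix (Fin N) (Fin N) ℂ)
      (D : Fin (m + 1) → Matrix (Fin N) (Fin N) R),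
      (∀ ℓ, ∃ (k : ℕ) (hk : k ≤ N) (d : Matrix (Fin k) (Fin k) R),
        IsBlockDiag S k d ∧ D ℓ = padMat hk d) →
      Ch S N (m + 1) (chainProd α D) := by
  intro m
  induction m with
  | zero =>
    intro N α D hD
    obtain ⟨k, hk, d, hd, hDeq⟩ := hD 0
    obtain ⟨D', hD', hEq⟩ := extend_blockDiag hone hk hd
    rw [chainProd_zero, hDeq, hEq]
    have h2 := Ch.cons (α 0 * scalP (Fin.castLE hk)) hD'
      (Ch.base ((scalP (Fin.castLE hk))ᵀ * α 1))
    simpa only [Matrix.map_mul, mul_assoc] using h2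
  | succ m ih =>
    intro N α D hD
    obtain ⟨k, hk, d, hd, hDeq⟩ := hD 0
    obtain ⟨D', hD', hEq⟩ := extend_blockDiag hone hk hd
    rw [chainProd_succ, hDeq, hEq]
    have hrest := ih (α ∘ Fin.succ) (D ∘ Fin.succ) (fun ℓ => hD ℓ.succ)
    have h2 := Ch.cons (α 0 * scalP (Fin.castLE hk)) hD'
      (Ch_smul_left ((scalP (Fin.castLE hk))ᵀ) hrest)
    simpa only [Matrix.map_mul, mul_assoc] using h2

theorem Ch_chainProd :
    ∀ {m N : ℕ} {z : Matrix (Fin N) (Fin N) R}, Ch S N (m + 1) z →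
      ∃ (α : Fin (m + 2) → Matrix (Fin N) (Fin N) ℂ)
        (D : Fin (m + 1) → Matrix (Fin N) (Fin N) R),
        (∀ ℓ, ∃ (k : ℕ) (hk : k ≤ N) (d : Matrix (Fin k) (Fin k) R),
          IsBlockDiag S k d ∧ D ℓ = padMat hk d) ∧ z = chainProd α D := by
  intro m
  induction m with
  | zero =>
    intro N z h
    cases h with
    | @cons α D hD m' z' h' =>
      cases h' with
      | base β =>
        refine ⟨![α, β], fun _ => D,
          fun ℓ => ⟨N, le_refl N, D, hD, (padMat_refl _ _).symm⟩, ?_⟩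
        rw [chainProd_zero]
        simp
  | succ m ih =>
    intro N z h
    cases h with
    | @cons α D hD m' z' h' =>
      obtain ⟨α', D', hvalid, hEq⟩ := ih h'
      refine ⟨Fin.cons α α', Fin.cons D D', ?_, ?_⟩
      · intro ℓ
        refine Fin.cases ?_ ?_ ℓ
        · exact ⟨N, le_refl N, D, hD, (padMat_refl _ _).symm⟩
        · intro i
          simpa [Fin.cons_succ] using hvalid i
      · rw [chainProd_succ]
        simp only [Fin.cons_zero, Function.comp_def, Fin.cons_succ]
        rw [← hEq]

theorem factorsThrough_iff (hone : (1 : Matrix (Fin 1) (Fin 1) R) ∈ S 1)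
    {n : ℕ} {x : Matrix (Fin n) (Fin n) R} :
    FactorsThrough S n x ↔
      ∃ (N m : ℕ) (hn : n ≤ N), Ch S N (m + 1) (padMat hn x) := by
  constructor
  · rintro ⟨N, m, hn, α, D, hval, hchain⟩
    exact ⟨N, m, hn, hchain ▸ chainProd_Ch hone α D hval⟩
  · rintro ⟨N, m, hn, hch⟩
    obtain ⟨α, D, hval, hEq⟩ := Ch_chainProd hch
    exact ⟨N, m, hn, α, D, hval, hEq⟩

end Bridge

section Main
variable {R : Type*} [Ring R] [Algebra ℂ R] {S : ∀ n : ℕ, Set (Matrix (Fin n) (Fin n) R)}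

theorem oneSub_mul' {a k N : ℕ} (f : Fin a → Fin N)
    (M : Matrix (Fin N) (Fin k) R) :
    ((1 : Matrix (Fin N) (Fin N) ℂ).submatrix f id).map (algebraMap ℂ R) * M =
      M.submatrix f id := by
  ext i j
  simp only [Matrix.mul_apply, Matrix.map_apply, Matrix.submatrix_apply, id_eq,
    Matrix.one_apply]
  rw [Finset.sum_congr rfl (fun l _ => by
    rw [apply_ite (algebraMap ℂ R), _root_.map_one, _root_.map_zero, ite_mul, one_mul,
      zero_mul])]
  exact (Finset.sum_ite_eq Finset.univ (f i) (fun l => M l j)).trans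
    (if_pos (Finset.mem_univ _))

theorem mul_oneSub' {a k N : ℕ} (f : Fin a → Fin N)
    (M : Matrix (Fin k) (Fin N) R) :
    M * ((1 : Matrix (Fin N) (Fin N) ℂ).submatrix id f).map (algebraMap ℂ R) =
      M.submatrix id f := by
  ext i j
  simp only [Matrix.mul_apply, Matrix.map_apply, Matrix.submatrix_apply, id_eq,
    Matrix.one_apply]
  rw [Finset.sum_congr rfl (fun l _ => by
    rw [apply_ite (algebraMap ℂ R), _root_.map_one, _root_.map_zero, mul_ite, mul_one,
      mul_zero])]
  exact (Finset.sum_ite_eq' Finset.univ (f j) (fun l => M i l)).trans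
    (if_pos (Finset.mem_univ _))

theorem ft_conj (hone : (1 : Matrix (Fin 1) (Fin 1) R) ∈ S 1)
    {n k : ℕ} {x : Matrix (Fin n) (Fin n) R} (hx : FactorsThrough S n x)
    (β : Matrix (Fin k) (Fin n) ℂ) (γ : Matrix (Fin n) (Fin k) ℂ) :
    FactorsThrough S k
      (β.map (algebraMap ℂ R) * x * γ.map (algebraMap ℂ R)) := by
  rw [factorsThrough_iff hone] at hx ⊢
  obtain ⟨N, m, hn, hch⟩ := hx
  have hNN' : N ≤ max N k := le_max_left _ _
  have hk' : k ≤ max N k := le_max_right _ _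
  have hn' : n ≤ max N k := hn.trans hNN'
  have hch' : Ch S (max N k) (m + 1) (padMat hn' x) := by
    have h2 := Ch_pad hone hNN' hch
    rwa [padMat_trans] at h2
  refine ⟨max N k, m, hk', ?_⟩
  have key : padMat hk' (β.map (algebraMap ℂ R) * x * γ.map (algebraMap ℂ R)) =
      (padR hk' hn' β).map (algebraMap ℂ R) * padMat hn' x *
        (padR hn' hk' γ).map (algebraMap ℂ R) := by
    rw [padR_map _ _ _ (map_zero _), padR_map _ _ _ (map_zero _),
      show padMat hn' x = padR hn' hn' x from (padR_eq hn' x).symm,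
      padR_mul, padR_mul, padR_eq]
  rw [key]
  exact Ch_smul_right _ (Ch_smul_left _ hch')

theorem ft_dsum (hone : (1 : Matrix (Fin 1) (Fin 1) R) ∈ S 1)
    {n m : ℕ} {x : Matrix (Fin n) (Fin n) R} {y : Matrix (Fin m) (Fin m) R}
    (hx : FactorsThrough S n x) (hy : FactorsThrough S m y) :
    FactorsThrough S (n + m)
      (Matrix.reindex finSumFinEquiv finSumFinEquiv (Matrix.fromBlocks x 0 0 y)) := by
  rw [factorsThrough_iff hone] at hx hy ⊢
  obtain ⟨N₁, a, hn1, hch1⟩ := hx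
  obtain ⟨N₂, b, hn2, hch2⟩ := hy
  have hn1' : n ≤ N₁ + 1 := hn1.trans (Nat.le_succ _)
  have hn2' : m ≤ N₂ + 1 := hn2.trans (Nat.le_succ _)
  have hch1' : Ch S (N₁ + 1) (max a b + 1) (padMat hn1' x) := by
    have h2 := Ch_pad hone (Nat.le_succ N₁) hch1
    rw [padMat_trans] at h2
    exact Ch_mono' hone (by omega) (by omega) h2
  have hch2' : Ch S (N₂ + 1) (max a b + 1) (padMat hn2' y) := by
    have h2 := Ch_pad hone (Nat.le_succ N₂) hch2
    rw [padMat_trans] at h2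
    exact Ch_mono' hone (by omega) (by omega) h2
  have hd := Ch_dsum hch1' hch2'
  have hnm : n + m ≤ (N₁ + 1) + (N₂ + 1) := add_le_add hn1' hn2'
  refine ⟨(N₁ + 1) + (N₂ + 1), max a b, hnm, ?_⟩
  set g : Fin (n + m) → Fin ((N₁ + 1) + (N₂ + 1)) := fun i =>
    finSumFinEquiv (Sum.map (Fin.castLE hn1') (Fin.castLE hn2') (finSumFinEquiv.symm i))
    with hg
  have key : padMat hnm
      (Matrix.reindex finSumFinEquiv finSumFinEquiv (Matrix.fromBlocks x 0 0 y)) =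
      (scalP g).map (algebraMap ℂ R) *
        (Matrix.reindex finSumFinEquiv finSumFinEquiv
          (Matrix.fromBlocks (padMat hn1' x) 0 0 (padMat hn2' y))) *
        ((scalP g)ᵀ).map (algebraMap ℂ R) := by
    have hsub : (Matrix.reindex finSumFinEquiv finSumFinEquiv
        (Matrix.fromBlocks (padMat hn1' x) 0 0 (padMat hn2' y))).submatrix g g =
        Matrix.reindex finSumFinEquiv finSumFinEquiv (Matrix.fromBlocks x 0 0 y) := by
      ext i j
      rcases hsi : finSumFinEquiv.symm i with ai | ai <;>
        rcases hsj : finSumFinEquiv.symm j with aj | aj <;>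
          simp [hg, Matrix.submatrix_apply, Matrix.reindex_apply, hsi, hsj,
            Equiv.symm_apply_apply, Matrix.fromBlocks_apply₁₁, Matrix.fromBlocks_apply₁₂,
            Matrix.fromBlocks_apply₂₁, Matrix.fromBlocks_apply₂₂, padMat,
            Fin.coe_castLE, ai.isLt, aj.isLt]
    rw [scalP_conj hnm, hsub]
  rw [key]
  exact Ch_smul_right _ (Ch_smul_left _ hd)

theorem ft_add (hone : (1 : Matrix (Fin 1) (Fin 1) R) ∈ S 1)
    {n : ℕ} {x y : Matrix (Fin n) (Fin n) R}
    (hx : FactorsThrough S n x) (hy : FactorsThrough S n y) :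
    FactorsThrough S n (x + y) := by
  have hd := ft_dsum hone hx hy
  set M : Matrix (Fin (n + n)) (Fin (n + n)) R :=
    Matrix.reindex finSumFinEquiv finSumFinEquiv (Matrix.fromBlocks x 0 0 y) with hM
  set β : Matrix (Fin n) (Fin (n + n)) ℂ :=
    (1 : Matrix (Fin (n + n)) (Fin (n + n)) ℂ).submatrix (Fin.castAdd n) id +
      (1 : Matrix (Fin (n + n)) (Fin (n + n)) ℂ).submatrix (Fin.natAdd n) id with hβ
  set γ : Matrix (Fin (n + n)) (Fin n) ℂ :=
    (1 : Matrix (Fin (n + n)) (Fin (n + n)) ℂ).submatrix id (Fin.castAdd n) +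
      (1 : Matrix (Fin (n + n)) (Fin (n + n)) ℂ).submatrix id (Fin.natAdd n) with hγ
  have key : x + y = β.map (algebraMap ℂ R) * M * γ.map (algebraMap ℂ R) := by
    have e11 : M.submatrix (Fin.castAdd n) (Fin.castAdd n) = x := by
      ext i j
      simp only [hM, Matrix.reindex_apply, Matrix.submatrix_apply,
        finSumFinEquiv_symm_apply_castAdd, Matrix.fromBlocks_apply₁₁]
    have e12 : M.submatrix (Fin.castAdd n) (Fin.natAdd n) = 0 := by
      ext i j
      simp only [hM, Matrix.reindex_apply, Matrix.submatrix_apply,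
        finSumFinEquiv_symm_apply_castAdd, finSumFinEquiv_symm_apply_natAdd,
        Matrix.fromBlocks_apply₁₂, Matrix.zero_apply]
    have e21 : M.submatrix (Fin.natAdd n) (Fin.castAdd n) = 0 := by
      ext i j
      simp only [hM, Matrix.reindex_apply, Matrix.submatrix_apply,
        finSumFinEquiv_symm_apply_castAdd, finSumFinEquiv_symm_apply_natAdd,
        Matrix.fromBlocks_apply₂₁, Matrix.zero_apply]
    have e22 : M.submatrix (Fin.natAdd n) (Fin.natAdd n) = y := by
      ext i j
      simp only [hM, Matrix.reindex_apply, Matrix.submatrix_apply,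
        finSumFinEquiv_symm_apply_natAdd, Matrix.fromBlocks_apply₂₂]
    rw [hβ, hγ, Matrix.map_add, Matrix.map_add, Matrix.add_mul, oneSub_mul',
      oneSub_mul', Matrix.add_mul, Matrix.mul_add, Matrix.mul_add,
      mul_oneSub', mul_oneSub', mul_oneSub', mul_oneSub']
    simp only [Matrix.submatrix_submatrix, Function.comp_id, Function.id_comp,
      Matrix.submatrix_id_id]
    rw [e11, e12, e21, e22]
    · simp
    · exact fun a b => map_add _ a b
    · exact fun a b => map_add _ a b
  rw [key]
  exact ft_conj hone hd β γ

theorem ft_mul (hone : (1 : Matrix (Fin 1) (Fin 1) R) ∈ S 1)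
    {n : ℕ} {x y : Matrix (Fin n) (Fin n) R}
    (hx : FactorsThrough S n x) (hy : FactorsThrough S n y) :
    FactorsThrough S n (x * y) := by
  rw [factorsThrough_iff hone] at hx hy ⊢
  obtain ⟨N₁, a, hn1, hch1⟩ := hx
  obtain ⟨N₂, b, hn2, hch2⟩ := hy
  have hn' : n ≤ max N₁ N₂ := hn1.trans (le_max_left _ _)
  have hch1' : Ch S (max N₁ N₂) (a + 1) (padMat hn' x) := by
    have h2 := Ch_pad hone (le_max_left N₁ N₂) hch1
    rwa [padMat_trans] at h2
  have hch2' : Ch S (max N₁ N₂) (b + 1) (padMat hn' y) := by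
    have h2 := Ch_pad hone (le_max_right N₁ N₂) hch2
    rwa [padMat_trans] at h2
  refine ⟨max N₁ N₂, a + b + 1, hn', ?_⟩
  rw [padMat_mul]
  have h3 := Ch_mul hch1' hch2'
  rwa [show a + 1 + (b + 1) = a + b + 1 + 1 from by omega] at h3

end Main

section Final
variable {R : Type*} [Ring R] [Algebra ℂ R] {S : ∀ n : ℕ, Set (Matrix (Fin n) (Fin n) R)}

theorem ft_scalar (hone : (1 : Matrix (Fin 1) (Fin 1) R) ∈ S 1)
    {n : ℕ} (β : Matrix (Fin n) (Fin n) ℂ) :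
    FactorsThrough S n (β.map (algebraMap ℂ R)) := by
  rw [factorsThrough_iff hone]
  refine ⟨n + 1, 0, Nat.le_succ n, ?_⟩
  rw [← padMat_map _ _ (map_zero _)]
  have h2 := Ch.cons (padMat (Nat.le_succ n) β)
    (isBlockDiag_one hone (Nat.succ_le_succ (Nat.zero_le n)))
    (Ch.base (1 : Matrix (Fin (n + 1)) (Fin (n + 1)) ℂ))
  simpa [Matrix.map_one _ (map_zero _) (_root_.map_one _)] using h2

theorem ft_mem (hone : (1 : Matrix (Fin 1) (Fin 1) R) ∈ S 1)
    {n : ℕ} {d : Matrix (Fin n) (Fin n) R} (h : d ∈ S n) :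
    FactorsThrough S n d := by
  rw [factorsThrough_iff hone]
  obtain ⟨D', hD', hEq⟩ := extend_blockDiag hone (Nat.le_succ n) (IsBlockDiag.base h)
  refine ⟨n + 1, 0, Nat.le_succ n, ?_⟩
  rw [hEq]
  exact Ch.cons _ hD' (Ch.base _)

theorem ft_pad (hone : (1 : Matrix (Fin 1) (Fin 1) R) ∈ S 1)
    {n N : ℕ} (h : n ≤ N) {x : Matrix (Fin n) (Fin n) R}
    (hx : FactorsThrough S n x) : FactorsThrough S N (padMat h x) := by
  rw [factorsThrough_iff hone] at hx ⊢
  obtain ⟨N₀, m, hn0, hch⟩ := hx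
  have h1 : N₀ ≤ max N₀ N := le_max_left _ _
  have h2 : N ≤ max N₀ N := le_max_right _ _
  refine ⟨max N₀ N, m, h2, ?_⟩
  have h3 := Ch_pad hone h1 hch
  rwa [padMat_trans,
    show padMat (hn0.trans h1) x = padMat h2 (padMat h x) from by rw [padMat_trans]] at h3

end Final

end Helpers

/-- Let `𝒜 ⊆ B(ℋ)` be a unital operator algebra and `S` a set of contractions in
`⋃ₙ Mₙ(𝒜)` containing `e₁₁ ⊗ 1`. The set `F` of elements of `𝒦₀ ⊗ 𝒜` admitting a
factorization `α₀ D₁ α₁ ⋯ D_m α_m` (scalar `α_ℓ`, block diagonal `D_ℓ` with blocks in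
`S`) is closed under addition, under left and right multiplication by scalar matrices,
and under block-diagonal direct sums; and if `S` together with `𝒦₀ ⊗ 1` generates
`𝒦₀ ⊗ 𝒜` as an algebra, then `F` is everything. -/
theorem factorizable_set_is_everything
    {ℋ : Type*} [NormedAddCommGroup ℋ] [InnerProductSpace ℂ ℋ] [CompleteSpace ℋ]
    (A : Subalgebra ℂ (ℋ →L[ℂ] ℋ))
    (S : ∀ n : ℕ, Set (Matrix (Fin n) (Fin n) ↥A))
    (hS : ∀ (n : ℕ) (d : Matrix (Fin n) (Fin n) ↥A), d ∈ S n →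
      matNorm (d.map fun a => (a : ℋ →L[ℂ] ℋ)) ≤ 1)
    (hone : (1 : Matrix (Fin 1) (Fin 1) ↥A) ∈ S 1) :
    (∀ (n : ℕ) (x y : Matrix (Fin n) (Fin n) ↥A),
      FactorsThrough S n x → FactorsThrough S n y → FactorsThrough S n (x + y)) ∧
    (∀ (n k : ℕ) (x : Matrix (Fin n) (Fin n) ↥A), FactorsThrough S n x →
      ∀ (β : Matrix (Fin k) (Fin n) ℂ) (γ : Matrix (Fin n) (Fin k) ℂ),
        FactorsThrough S k
          (β.map (algebraMap ℂ ↥A) * x * γ.map (algebraMap ℂ ↥A))) ∧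
    (∀ (n m : ℕ) (x : Matrix (Fin n) (Fin n) ↥A) (y : Matrix (Fin m) (Fin m) ↥A),
      FactorsThrough S n x → FactorsThrough S m y →
      FactorsThrough S (n + m)
        (Matrix.reindex finSumFinEquiv finSumFinEquiv (Matrix.fromBlocks x 0 0 y))) ∧
    ((∀ (n : ℕ) (x : Matrix (Fin n) (Fin n) ↥A), Gen S n x) →
      ∀ (n : ℕ) (x : Matrix (Fin n) (Fin n) ↥A), FactorsThrough S n x) := by
  refine ⟨fun n x y hx hy => ft_add hone hx hy,
    fun n k x hx β γ => ft_conj hone hx β γ,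
    fun n m x y hx hy => ft_dsum hone hx hy,
    fun hGen n x => ?_⟩
  have h := hGen n x
  induction h with
  | scalar β => exact ft_scalar hone β
  | mem h => exact ft_mem hone h
  | add h1 h2 ih1 ih2 => exact ft_add hone ih1 ih2
  | mul h1 h2 ih1 ih2 => exact ft_mul hone ih1 ih2
  | pad h hx ih => exact ft_pad hone h ih
end
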